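/- ζ(3) = (1/4) ∑_{k≥1} (−1)^{k−1} (56k² − 32k + 5) / (k³ (2k−1)² C(2k,k) C(3k,k)). -/

import Mathlib

open Filter Topology

namespace Zeta3Amdeberhan

noncomputable def g (α i : ℕ) : ℝ :=
  (-1) ^ (α + 1) * ((α + 1).factorial : ℝ) ^ 2 * ((α + i).factorial : ℝ) /
    (((α : ℝ) + 1) ^ 2 * (2 * (α : ℝ) + 1 + (i : ℝ)) ^ 2 * ((3 * α + 1 + i).factorial : ℝ))

noncomputable def a (α i : ℕ) : ℝ :=
  (-1) ^ (α + 1) * ((α + 1).factorial : ℝ) ^ 2 * ((α + 1 + i).factorial : ℝ) /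
    (2 * ((α : ℝ) + 1) ^ 3 * ((3 * α + 3 + i).factorial : ℝ))

noncomputable def T (α : ℕ) : ℝ := -∑' i, g α i

noncomputable def t (α : ℕ) : ℝ := -g α 0 - g α 1 - a α 0

lemma fact1 (α : ℕ) : 4 ^ α * α.factorial ^ 3 ≤ (3 * α).factorial := by
  induction α with
  | zero => simp
  | succ n ih =>
    have key : 4 * (n + 1) ^ 3 ≤ (3 * n + 3) * ((3 * n + 2) * (3 * n + 1)) := by
      have e1 : 4 * (n + 1) ^ 3 = 4 * n ^ 3 + 12 * n ^ 2 + 12 * n + 4 := by ring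
      have e2 : (3 * n + 3) * ((3 * n + 2) * (3 * n + 1))
          = 27 * n ^ 3 + 54 * n ^ 2 + 33 * n + 6 := by ring
      rw [e1, e2]
      linarith [Nat.zero_le (n ^ 3), Nat.zero_le (n ^ 2), Nat.zero_le n]
    calc 4 ^ (n + 1) * (n + 1).factorial ^ 3
        = 4 * (n + 1) ^ 3 * (4 ^ n * n.factorial ^ 3) := by
          rw [Nat.factorial_succ]; ring
      _ ≤ 4 * (n + 1) ^ 3 * (3 * n).factorial := Nat.mul_le_mul_left _ ih
      _ ≤ (3 * n + 3) * ((3 * n + 2) * (3 * n + 1)) * (3 * n).factorial :=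
          Nat.mul_le_mul_right _ key
      _ = (3 * (n + 1)).factorial := by
          rw [show 3 * (n + 1) = 3 * n + 1 + 1 + 1 by ring, Nat.factorial_succ,
            Nat.factorial_succ, Nat.factorial_succ]
          ring

lemma factA (α i : ℕ) :
    4 ^ α * α.factorial ^ 2 * (α + i).factorial ≤ (3 * α + 1 + i).factorial := by
  induction i with
  | zero =>
    have h1 : 4 ^ α * α.factorial ^ 2 * (α + 0).factorial = 4 ^ α * α.factorial ^ 3 := by
      rw [Nat.add_zero]; ring
    rw [h1, show 3 * α + 1 + 0 = 3 * α + 1 by ring, Nat.factorial_succ]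
    calc 4 ^ α * α.factorial ^ 3 ≤ (3 * α).factorial := fact1 α
      _ ≤ (3 * α + 1) * (3 * α).factorial := Nat.le_mul_of_pos_left _ (by omega)
  | succ m ih =>
    rw [show α + (m + 1) = (α + m) + 1 by ring,
      show 3 * α + 1 + (m + 1) = (3 * α + 1 + m) + 1 by ring,
      Nat.factorial_succ, Nat.factorial_succ]
    calc 4 ^ α * α.factorial ^ 2 * ((α + m + 1) * (α + m).factorial)
        = (α + m + 1) * (4 ^ α * α.factorial ^ 2 * (α + m).factorial) := by ring
      _ ≤ (α + m + 1) * (3 * α + 1 + m).factorial := Nat.mul_le_mul_left _ ih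
      _ ≤ (3 * α + 1 + m + 1) * (3 * α + 1 + m).factorial :=
          Nat.mul_le_mul_right _ (by omega)

lemma g_abs (α i : ℕ) : |g α i| =
    ((α + 1).factorial : ℝ) ^ 2 * ((α + i).factorial : ℝ) /
      (((α : ℝ) + 1) ^ 2 * (2 * (α : ℝ) + 1 + (i : ℝ)) ^ 2 * ((3 * α + 1 + i).factorial : ℝ)) := by
  unfold g
  rw [abs_div, abs_mul, abs_mul, abs_pow, abs_neg, abs_one, one_pow, one_mul]
  rw [abs_of_nonneg (by positivity : (0:ℝ) ≤ ((α + 1).factorial : ℝ) ^ 2),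
    abs_of_nonneg (by positivity : (0:ℝ) ≤ ((α + i).factorial : ℝ)),
    abs_of_nonneg (by positivity : (0:ℝ) ≤ ((α : ℝ) + 1) ^ 2 * (2 * (α : ℝ) + 1 + (i : ℝ)) ^ 2 *
      ((3 * α + 1 + i).factorial : ℝ))]

lemma g_abs_le (α i : ℕ) : |g α i| ≤ (1 / 4) ^ α * (1 / ((i : ℝ) + 1) ^ 2) := by
  rw [g_abs]
  have hfs : ((α + 1).factorial : ℝ) = ((α : ℝ) + 1) * (α.factorial : ℝ) := by
    exact_mod_cast Nat.factorial_succ α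
  have hA : ((4 : ℝ)) ^ α * (α.factorial : ℝ) ^ 2 * ((α + i).factorial : ℝ)
      ≤ ((3 * α + 1 + i).factorial : ℝ) := by exact_mod_cast factA α i
  have h2 : ((i : ℝ) + 1) ^ 2 ≤ (2 * (α : ℝ) + 1 + (i : ℝ)) ^ 2 := by
    have h0 : (0:ℝ) ≤ (i : ℝ) + 1 := by positivity
    have h' : (i : ℝ) + 1 ≤ 2 * (α : ℝ) + 1 + (i : ℝ) := by
      have := (Nat.cast_nonneg α : (0:ℝ) ≤ (α:ℝ)); linarith
    exact pow_le_pow_left₀ h0 h' 2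
  rw [div_le_iff₀ (by positivity)]
  have key : ((α + 1).factorial : ℝ) ^ 2 * ((α + i).factorial : ℝ) * (4 ^ α * ((i:ℝ)+1) ^ 2)
      ≤ ((α : ℝ) + 1) ^ 2 * (2 * (α : ℝ) + 1 + (i : ℝ)) ^ 2 * ((3 * α + 1 + i).factorial : ℝ) := by
    calc ((α + 1).factorial : ℝ) ^ 2 * ((α + i).factorial : ℝ) * (4 ^ α * ((i:ℝ)+1) ^ 2)
        = ((α : ℝ) + 1) ^ 2 * ((4:ℝ) ^ α * (α.factorial : ℝ) ^ 2 * ((α + i).factorial : ℝ))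
            * (((i:ℝ)+1) ^ 2) := by rw [hfs]; ring
      _ ≤ ((α : ℝ) + 1) ^ 2 * ((3 * α + 1 + i).factorial : ℝ)
            * ((2 * (α : ℝ) + 1 + (i : ℝ)) ^ 2) := by gcongr <;> positivity
      _ = ((α : ℝ) + 1) ^ 2 * (2 * (α : ℝ) + 1 + (i : ℝ)) ^ 2 * ((3 * α + 1 + i).factorial : ℝ) := by
          ring
  calc ((α + 1).factorial : ℝ) ^ 2 * ((α + i).factorial : ℝ)
      ≤ (((α : ℝ) + 1) ^ 2 * (2 * (α : ℝ) + 1 + (i : ℝ)) ^ 2 * ((3 * α + 1 + i).factorial : ℝ))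
        / (4 ^ α * ((i:ℝ)+1) ^ 2) := (le_div_iff₀ (by positivity)).mpr key
    _ = (1 / 4) ^ α * (1 / ((i : ℝ) + 1) ^ 2) *
        (((α : ℝ) + 1) ^ 2 * (2 * (α : ℝ) + 1 + (i : ℝ)) ^ 2 * ((3 * α + 1 + i).factorial : ℝ)) := by
        rw [div_pow, one_pow, div_eq_mul_inv, mul_inv, one_div]
        ring

lemma summable_sq : Summable (fun i : ℕ => 1 / ((i : ℝ) + 1) ^ 2) := by
  have h := (Real.summable_one_div_nat_pow (p := 2)).mpr (by norm_num)
  have h2 := (summable_nat_add_iff 1).mpr h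
  refine h2.congr fun i => ?_
  push_cast
  ring

lemma summable_g (α : ℕ) : Summable (g α) := by
  refine Summable.of_norm_bounded (g := fun i => (1 / 4 : ℝ) ^ α * (1 / ((i : ℝ) + 1) ^ 2))
    (summable_sq.mul_left _) fun i => ?_
  simpa [Real.norm_eq_abs] using g_abs_le α i

lemma kai (α i : ℕ) : g α (i + 2) - g (α + 1) i = a α i - a α (i + 1) := by
  unfold g a
  rw [show α + (i + 2) = (α + 1 + i) + 1 by omega,
      show 3 * α + 1 + (i + 2) = 3 * α + 3 + i by omega,
      show 3 * (α + 1) + 1 + i = (3 * α + 3 + i) + 1 by omega,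
      show α + 1 + (i + 1) = (α + 1 + i) + 1 by omega,
      show 3 * α + 3 + (i + 1) = (3 * α + 3 + i) + 1 by omega,
      show α + 1 + 1 = (α + 1) + 1 from rfl]
  simp only [Nat.factorial_succ]
  push_cast
  have hQ : ((α + 1 + i).factorial : ℝ) ≠ 0 := Nat.cast_ne_zero.mpr (Nat.factorial_ne_zero _)
  have hR : ((3 * α + 3 + i).factorial : ℝ) ≠ 0 := Nat.cast_ne_zero.mpr (Nat.factorial_ne_zero _)
  have hF : (α.factorial : ℝ) ≠ 0 := Nat.cast_ne_zero.mpr (Nat.factorial_ne_zero _)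
  have h1 : ((α : ℝ) + 1) ≠ 0 := by positivity
  have h2 : ((α : ℝ) + 2) ≠ 0 := by positivity
  have h3 : (2 * (α : ℝ) + 1 + ((i : ℝ) + 2)) ≠ 0 := by positivity
  have h4 : (2 * ((α : ℝ) + 1) + 1 + (i : ℝ)) ≠ 0 := by positivity
  have h5 : (3 * (α : ℝ) + 3 + (i : ℝ) + 1) ≠ 0 := by positivity
  field_simp
  ring
lemma a_abs (α i : ℕ) : |a α i| =
    ((α + 1).factorial : ℝ) ^ 2 * ((α + 1 + i).factorial : ℝ) /
      (2 * ((α : ℝ) + 1) ^ 3 * ((3 * α + 3 + i).factorial : ℝ)) := by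
  unfold a
  rw [abs_div, abs_mul, abs_mul, abs_pow, abs_neg, abs_one, one_pow, one_mul]
  rw [abs_of_nonneg (by positivity : (0:ℝ) ≤ ((α + 1).factorial : ℝ) ^ 2),
    abs_of_nonneg (by positivity : (0:ℝ) ≤ ((α + 1 + i).factorial : ℝ)),
    abs_of_nonneg (by positivity : (0:ℝ) ≤ 2 * ((α : ℝ) + 1) ^ 3 *
      ((3 * α + 3 + i).factorial : ℝ))]

lemma factC (α i : ℕ) : (i + 1) * (α + 1 + i).factorial ≤ (3 * α + 3 + i).factorial := by
  rw [show 3 * α + 3 + i = (3 * α + 2 + i) + 1 by omega, Nat.factorial_succ]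
  exact Nat.mul_le_mul (by omega) (Nat.factorial_le (by omega))

lemma a_le (α i : ℕ) : |a α i| ≤ ((α + 1).factorial : ℝ) ^ 2 * (1 / ((i : ℝ) + 1)) := by
  rw [a_abs, div_le_iff₀ (by positivity)]
  have hC : ((i : ℝ) + 1) * ((α + 1 + i).factorial : ℝ) ≤ ((3 * α + 3 + i).factorial : ℝ) := by
    exact_mod_cast factC α i
  have hα : (0:ℝ) ≤ (α : ℝ) := by positivity
  have h1 : (1:ℝ) ≤ 2 * ((α : ℝ) + 1) ^ 3 := by nlinarith [hα, sq_nonneg ((α:ℝ) + 1), mul_nonneg hα (sq_nonneg ((α:ℝ) + 1))]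
  calc ((α + 1).factorial : ℝ) ^ 2 * ((α + 1 + i).factorial : ℝ)
      ≤ ((α + 1).factorial : ℝ) ^ 2 * (1 / ((i : ℝ) + 1)) * (((i : ℝ) + 1)
          * ((α + 1 + i).factorial : ℝ)) := by
        rw [show ((α + 1).factorial : ℝ) ^ 2 * (1 / ((i : ℝ) + 1)) * (((i : ℝ) + 1)
          * ((α + 1 + i).factorial : ℝ)) = ((α + 1).factorial : ℝ) ^ 2 * ((α + 1 + i).factorial : ℝ)
          * (((i : ℝ) + 1) / ((i : ℝ) + 1)) by ring, div_self (by positivity), mul_one]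
    _ ≤ ((α + 1).factorial : ℝ) ^ 2 * (1 / ((i : ℝ) + 1)) * ((3 * α + 3 + i).factorial : ℝ) := by
        gcongr
    _ ≤ ((α + 1).factorial : ℝ) ^ 2 * (1 / ((i : ℝ) + 1)) *
          (2 * ((α : ℝ) + 1) ^ 3 * ((3 * α + 3 + i).factorial : ℝ)) := by
        rw [show 2 * ((α : ℝ) + 1) ^ 3 * ((3 * α + 3 + i).factorial : ℝ)
          = ((3 * α + 3 + i).factorial : ℝ) * (2 * ((α : ℝ) + 1) ^ 3) by ring]
        rw [← mul_assoc]
        exact le_mul_of_one_le_right (by positivity) h1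

lemma tendsto_a (α : ℕ) : Tendsto (fun i => a α i) atTop (𝓝 0) := by
  apply squeeze_zero_norm (fun i => by simpa [Real.norm_eq_abs] using a_le α i)
  have := tendsto_one_div_add_atTop_nhds_zero_nat.const_mul (((α + 1).factorial : ℝ) ^ 2)
  simpa using this

lemma telescope_a (α : ℕ) : ∑' i, (a α i - a α (i + 1)) = a α 0 := by
  have hfe : (fun i => a α i - a α (i + 1)) = fun i => g α (i + 2) - g (α + 1) i :=
    funext fun i => (kai α i).symm
  have hsummable : Summable (fun i => a α i - a α (i + 1)) := by
    rw [hfe]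
    exact ((summable_nat_add_iff 2).mpr (summable_g α)).sub (summable_g (α + 1))
  have h1 := hsummable.hasSum.tendsto_sum_nat
  have h1' : Tendsto (fun n => a α 0 - a α n) atTop (𝓝 (∑' i, (a α i - a α (i + 1)))) := by
    simpa only [Finset.sum_range_sub' (a α)] using h1
  have h2 : Tendsto (fun n => a α 0 - a α n) atTop (𝓝 (a α 0 - 0)) :=
    tendsto_const_nhds.sub (tendsto_a α)
  have := tendsto_nhds_unique h1' h2
  simpa using this

lemma T_succ (α : ℕ) : T α - T (α + 1) = t α := by
  have hg := summable_g α
  have hg1 := summable_g (α + 1)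
  have hg2 : Summable (fun i => g α (i + 2)) := (summable_nat_add_iff 2).mpr hg
  have e1 : ∑' i, g α i = g α 0 + (g α (0 + 1) + ∑' i, g α (i + 1 + 1)) := by
    rw [Summable.tsum_eq_zero_add hg, Summable.tsum_eq_zero_add ((summable_nat_add_iff 1).mpr hg)]
  have e3 : ∑' i, g α (i + 1 + 1) = ∑' i, g α (i + 2) := tsum_congr fun i => by norm_num
  have e1' : ∑' i, g α i = g α 0 + g α 1 + ∑' i, g α (i + 2) := by
    rw [e1, e3]; ring
  have e2 : ∑' i, g α (i + 2) - ∑' i, g (α + 1) i = a α 0 := by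
    rw [← Summable.tsum_sub hg2 hg1, tsum_congr (fun i => kai α i), telescope_a]
  unfold T t
  have : -(g α 0 + g α 1 + ∑' i, g α (i + 2)) + ∑' i, g (α + 1) i = -g α 0 - g α 1 - a α 0 := by
    linarith [e2]
  rw [e1']
  linarith [this]

lemma summable_abs_g (α : ℕ) : Summable (fun i => ‖g α i‖) := by
  refine Summable.of_nonneg_of_le (fun i => norm_nonneg _) (fun i => ?_)
    (summable_sq.mul_left ((1/4:ℝ)^α))
  simpa [Real.norm_eq_abs] using g_abs_le α i

lemma T_abs_le (α : ℕ) : ‖T α‖ ≤ (1/4:ℝ)^α * ∑' i : ℕ, 1/((i:ℝ)+1)^2 := by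
  unfold T; rw [norm_neg]
  calc ‖∑' i, g α i‖ ≤ ∑' i, ‖g α i‖ := norm_tsum_le_tsum_norm (summable_abs_g α)
    _ ≤ ∑' i : ℕ, (1/4:ℝ)^α * (1/((i:ℝ)+1)^2) :=
        Summable.tsum_le_tsum (fun i => by simpa [Real.norm_eq_abs] using g_abs_le α i)
          (summable_abs_g α) (summable_sq.mul_left _)
    _ = (1/4:ℝ)^α * ∑' i : ℕ, 1/((i:ℝ)+1)^2 := tsum_mul_left

lemma tendsto_T : Tendsto T atTop (𝓝 0) := by
  apply squeeze_zero_norm T_abs_le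
  have := (tendsto_pow_atTop_nhds_zero_of_lt_one (by norm_num : (0:ℝ) ≤ 1/4)
    (by norm_num : (1/4:ℝ) < 1)).mul_const (∑' i : ℕ, 1/((i:ℝ)+1)^2)
  simpa using this

lemma factB (α : ℕ) :
    4^α * (α+1).factorial^2 * (α+1).factorial ≤ 2 * (α+1)^3 * (3*α+3).factorial := by
  calc 4^α * (α+1).factorial^2 * (α+1).factorial
      = (α+1)^3 * (4^α * α.factorial^3) := by rw [Nat.factorial_succ]; ring
    _ ≤ (α+1)^3 * (3*α).factorial := Nat.mul_le_mul_left _ (fact1 α)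
    _ ≤ (α+1)^3 * (3*α+3).factorial := Nat.mul_le_mul_left _ (Nat.factorial_le (by omega))
    _ ≤ 2 * (α+1)^3 * (3*α+3).factorial := by
        rw [mul_assoc]; exact Nat.le_mul_of_pos_left _ (by omega)

lemma a0_le (α : ℕ) : |a α 0| ≤ (1/4:ℝ)^α := by
  rw [a_abs, show α+1+0 = α+1 from rfl, show 3*α+3+0 = 3*α+3 from rfl,
    div_le_iff₀ (by positivity)]
  have hB : ((4:ℝ))^α * ((α+1).factorial:ℝ)^2 * ((α+1).factorial:ℝ)
      ≤ 2 * ((α:ℝ)+1)^3 * ((3*α+3).factorial:ℝ) := by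
    have := factB α
    have h' : ((4^α * (α+1).factorial^2 * (α+1).factorial : ℕ) : ℝ)
        ≤ ((2 * (α+1)^3 * (3*α+3).factorial : ℕ) : ℝ) := Nat.cast_le.mpr this
    push_cast at h'
    convert h' using 2 <;> push_cast <;> ring
  rw [one_div, inv_pow, le_inv_mul_iff₀ (by positivity : (0:ℝ) < (4:ℝ)^α), ← mul_assoc]
  exact hB

lemma t_abs_le (α : ℕ) : ‖t α‖ ≤ 3 * (1/4:ℝ)^α := by
  have hg0 : |g α 0| ≤ (1/4:ℝ)^α := by
    have := g_abs_le α 0; simpa using this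
  have hg1 : |g α 1| ≤ (1/4:ℝ)^α := by
    have h := g_abs_le α 1
    calc |g α 1| ≤ (1/4:ℝ)^α * (1/(((1:ℕ):ℝ)+1)^2) := h
      _ ≤ (1/4:ℝ)^α * 1 := by gcongr; norm_num
      _ = (1/4:ℝ)^α := mul_one _
  have ha0 := a0_le α
  rw [Real.norm_eq_abs]
  unfold t
  calc |(-g α 0 - g α 1 - a α 0)| = |(-(g α 0 + (g α 1 + a α 0)))| := by ring_nf
    _ = |g α 0 + (g α 1 + a α 0)| := abs_neg _
    _ ≤ |g α 0| + |g α 1 + a α 0| := abs_add_le _ _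
    _ ≤ |g α 0| + (|g α 1| + |a α 0|) := by gcongr; exact abs_add_le _ _
    _ ≤ (1/4:ℝ)^α + ((1/4:ℝ)^α + (1/4:ℝ)^α) := by gcongr
    _ = 3 * (1/4:ℝ)^α := by ring

lemma summable_t : Summable t :=
  Summable.of_norm_bounded (g := fun α => 3 * (1/4:ℝ)^α)
    ((summable_geometric_of_lt_one (by norm_num) (by norm_num)).mul_left 3) t_abs_le

lemma tsum_t : ∑' n, t n = T 0 := by
  have h1 := summable_t.hasSum.tendsto_sum_nat
  have hpart : ∀ N, ∑ i ∈ Finset.range N, t i = T 0 - T N := fun N => by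
    rw [← Finset.sum_range_sub' T N]
    exact Finset.sum_congr rfl fun i _ => (T_succ i).symm
  simp only [hpart] at h1
  have h2 : Tendsto (fun N => T 0 - T N) atTop (𝓝 (T 0 - 0)) :=
    tendsto_const_nhds.sub tendsto_T
  have := tendsto_nhds_unique h1 h2
  simpa using this

lemma T_zero : T 0 = ∑' k : ℕ, (1:ℝ)/((k:ℝ)+1)^3 := by
  have hg0 : ∀ i : ℕ, g 0 i = -((1:ℝ)/((i:ℝ)+1)^3) := by
    intro i
    unfold g
    rw [show (0:ℕ)+i = i from by omega, show 3*0+1+i = i+1 from by omega]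
    simp only [Nat.factorial_succ, Nat.factorial_zero]
    have hf : ((i).factorial:ℝ) ≠ 0 := Nat.cast_ne_zero.mpr (Nat.factorial_ne_zero _)
    have hi : ((i:ℝ)+1) ≠ 0 := by positivity
    push_cast
    field_simp
    ring
  unfold T
  rw [tsum_congr hg0, tsum_neg, neg_neg]

lemma t_closed (n : ℕ) : t n =
    (-1:ℝ)^n * (56*((n:ℝ)+1)^2 - 32*((n:ℝ)+1) + 5) * ((n+1).factorial:ℝ)^3 /
      (4*((n:ℝ)+1)^3*(2*(n:ℝ)+1)^2*((3*n+3).factorial:ℝ)) := by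
  unfold t g a
  rw [show n+0 = n from rfl, show 3*n+1+0 = 3*n+1 from rfl,
    show n+1+0 = n+1 from rfl,
    show 3*n+1+1 = (3*n+1)+1 from rfl,
    show 3*n+3+0 = ((3*n+1)+1)+1 from by omega,
    show 3*n+3 = ((3*n+1)+1)+1 from by omega]
  simp only [Nat.factorial_succ]
  have hf : ((n).factorial:ℝ) ≠ 0 := Nat.cast_ne_zero.mpr (Nat.factorial_ne_zero _)
  have hE : (((3*n+1)).factorial:ℝ) ≠ 0 := Nat.cast_ne_zero.mpr (Nat.factorial_ne_zero _)
  have h1 : ((n:ℝ)+1) ≠ 0 := by positivity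
  have h2 : (2*(n:ℝ)+1) ≠ 0 := by positivity
  push_cast
  field_simp
  ring

lemma t_eq (n : ℕ) : (-1:ℝ)^n * (56*((n:ℝ)+1)^2 - 32*((n:ℝ)+1) + 5) /
    (((n:ℝ)+1)^3 * (2*((n:ℝ)+1)-1)^2 * ((2*(n+1)).choose (n+1):ℝ) *
      ((3*(n+1)).choose (n+1):ℝ)) = 4 * t n := by
  have h1n : (2*(n+1)).choose (n+1) * (n+1).factorial * (n+1).factorial
      = (2*(n+1)).factorial := by
    have h := Nat.choose_mul_factorial_mul_factorial (show n+1 ≤ 2*(n+1) by omega)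
    rwa [show 2*(n+1)-(n+1) = n+1 by omega] at h
  have h2n : (3*(n+1)).choose (n+1) * (n+1).factorial * (2*(n+1)).factorial
      = (3*(n+1)).factorial := by
    have h := Nat.choose_mul_factorial_mul_factorial (show n+1 ≤ 3*(n+1) by omega)
    rwa [show 3*(n+1)-(n+1) = 2*(n+1) by omega] at h
  have hP : ((3*n+3).factorial : ℝ) = ((2*(n+1)).choose (n+1) : ℝ) *
      ((3*(n+1)).choose (n+1):ℝ) * ((n+1).factorial:ℝ)^3 := by
    have e1 : ((2*(n+1)).factorial : ℝ) = ((2*(n+1)).choose (n+1):ℝ) *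
        ((n+1).factorial:ℝ) * ((n+1).factorial:ℝ) := by exact_mod_cast h1n.symm
    have e2 : ((3*(n+1)).factorial : ℝ) = ((3*(n+1)).choose (n+1):ℝ) *
        ((n+1).factorial:ℝ) * ((2*(n+1)).factorial:ℝ) := by exact_mod_cast h2n.symm
    rw [show 3*n+3 = 3*(n+1) by ring, e2, e1]; ring
  rw [t_closed, hP]
  have hc2 : ((2*(n+1)).choose (n+1) : ℝ) ≠ 0 :=
    Nat.cast_ne_zero.mpr (Nat.choose_pos (by omega)).ne'
  have hc3 : ((3*(n+1)).choose (n+1) : ℝ) ≠ 0 :=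
    Nat.cast_ne_zero.mpr (Nat.choose_pos (by omega)).ne'
  have hf : ((n+1).factorial:ℝ) ≠ 0 := Nat.cast_ne_zero.mpr (Nat.factorial_ne_zero _)
  have h1 : ((n:ℝ)+1) ≠ 0 := by positivity
  have h2 : (2*(n:ℝ)+1) ≠ 0 := by positivity
  have h3 : (2*((n:ℝ)+1)-1) ≠ 0 := by
    rw [show 2*((n:ℝ)+1)-1 = 2*(n:ℝ)+1 by ring]; exact h2
  rw [show 2*((n:ℝ)+1)-1 = 2*(n:ℝ)+1 by ring]
  field_simp

end Zeta3Amdeberhan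

theorem zeta3_amdeberhan_series :
    (∑' k : ℕ, (1 : ℝ) / ((k : ℝ) + 1) ^ 3) =
      (1 / 4) * ∑' n : ℕ, (-1 : ℝ) ^ n *
        (56 * ((n : ℝ) + 1) ^ 2 - 32 * ((n : ℝ) + 1) + 5) /
        (((n : ℝ) + 1) ^ 3 * (2 * ((n : ℝ) + 1) - 1) ^ 2 *
          ((2 * (n + 1)).choose (n + 1) : ℝ) * ((3 * (n + 1)).choose (n + 1) : ℝ)) := by
  rw [tsum_congr Zeta3Amdeberhan.t_eq, tsum_mul_left, Zeta3Amdeberhan.tsum_t,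
    Zeta3Amdeberhan.T_zero]
  ring
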